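/- Let y_1, …, y_n be nonzero vectors in ℝ^q that span ℝ^q and let c > 0. Let Γ be a symmetric positive definite q×q matrix, let α > 0, and set Γ′ = α · Γ^(1/2) N(Γ) Γ^(1/2). Let λ₁ and λ_q denote the largest and smallest eigenvalues of N(Γ). Then in the Loewner order: N(Γ′) ⪰ λ_q·I + (1 − α·λ_q)·Γ′⁻¹ and N(Γ′) ⪯ λ₁·I + (1 − α·λ₁)·Γ′⁻¹. -/

import Mathlib

open Matrix Classical

set_option maxHeartbeats 1000000

open scoped MatrixOrder in
/-- Principal (symmetric positive semidefinite) square root of a matrix;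
junk value `0` if the matrix is not positive semidefinite. -/
noncomputable def matSqrt {q : ℕ} (A : Matrix (Fin q) (Fin q) ℝ) : Matrix (Fin q) (Fin q) ℝ :=
  if h : A.PosSemidef then CFC.sqrt A else 0

/-- Loewner order: `loewnerLE A B` iff `B - A` is positive semidefinite. -/
def loewnerLE {q : ℕ} (A B : Matrix (Fin q) (Fin q) ℝ) : Prop := (B - A).PosSemidef

/-- Largest eigenvalue of a (Hermitian) matrix; junk value `0` otherwise. -/
noncomputable def maxEig {q : ℕ} (A : Matrix (Fin q) (Fin q) ℝ) : ℝ :=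
  if h : A.IsHermitian then ⨆ i, h.eigenvalues i else 0

/-- Smallest eigenvalue of a (Hermitian) matrix; junk value `0` otherwise. -/
noncomputable def minEig {q : ℕ} (A : Matrix (Fin q) (Fin q) ℝ) : ℝ :=
  if h : A.IsHermitian then ⨅ i, h.eigenvalues i else 0

/-- The map `N(Γ) = c ∑ᵢ (Γ^(-1/2) yᵢ yᵢᵀ Γ^(-1/2)) / (yᵢᵀ Γ⁻¹ yᵢ) + Γ⁻¹`. -/
noncomputable def Nmat {q n : ℕ} (y : Fin n → (Fin q → ℝ)) (c : ℝ)
    (Γ : Matrix (Fin q) (Fin q) ℝ) : Matrix (Fin q) (Fin q) ℝ :=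
  c • ∑ i, (y i ⬝ᵥ Γ⁻¹ *ᵥ y i)⁻¹ •
      ((matSqrt Γ)⁻¹ * vecMulVec (y i) (y i) * (matSqrt Γ)⁻¹)
    + Γ⁻¹

section Auxiliary

variable {q n : ℕ}

lemma star_vec (x : Fin q → ℝ) : star x = x := star_trivial x

lemma sum_mulVec' (M : Fin n → Matrix (Fin q) (Fin q) ℝ) (x : Fin q → ℝ) :
    (∑ i, M i) *ᵥ x = ∑ i, M i *ᵥ x := by
  ext j
  simp only [Matrix.mulVec, dotProduct, Matrix.sum_apply, Finset.sum_apply,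
    Finset.sum_mul]
  exact Finset.sum_comm

lemma dotProduct_sum' (x : Fin q → ℝ) (v : Fin n → Fin q → ℝ) :
    x ⬝ᵥ (∑ i, v i) = ∑ i, x ⬝ᵥ v i := by
  simp only [dotProduct, Finset.sum_apply, Finset.mul_sum]
  exact Finset.sum_comm

lemma hermTranspose {A : Matrix (Fin q) (Fin q) ℝ} (hA : A.IsHermitian) : Aᵀ = A := by
  calc Aᵀ = Aᴴ := by ext i j; simp [Matrix.conjTranspose_apply]
    _ = A := hA

lemma quad_conj {B M : Matrix (Fin q) (Fin q) ℝ} (hB : Bᵀ = B) (x : Fin q → ℝ) :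
    x ⬝ᵥ (B * M * B) *ᵥ x = (B *ᵥ x) ⬝ᵥ M *ᵥ (B *ᵥ x) := by
  rw [← Matrix.mulVec_mulVec, ← Matrix.mulVec_mulVec, Matrix.dotProduct_mulVec,
    ← Matrix.mulVec_transpose, hB]

lemma quad_vecMulVec (v x : Fin q → ℝ) : x ⬝ᵥ (vecMulVec v v) *ᵥ x = (v ⬝ᵥ x) ^ 2 := by
  simp only [Matrix.mulVec, dotProduct, Matrix.vecMulVec_apply, pow_two,
    Finset.sum_mul_sum]
  refine Finset.sum_congr rfl fun i _ => ?_
  rw [Finset.mul_sum]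
  exact Finset.sum_congr rfl fun k _ => by ring

lemma scaled_le_inv {s d d' : ℝ} (hd : 0 < d) (hd' : 0 < d') (h : s * d' ≤ d) :
    s * d⁻¹ ≤ d'⁻¹ := by
  rw [inv_eq_one_div, inv_eq_one_div, mul_one_div, div_le_div_iff₀ hd hd']
  linarith

lemma inv_le_scaled {s d d' : ℝ} (hd : 0 < d) (hd' : 0 < d') (h : d ≤ s * d') :
    d'⁻¹ ≤ s * d⁻¹ := by
  rw [inv_eq_one_div, inv_eq_one_div, mul_one_div, div_le_div_iff₀ hd' hd]
  linarith

open scoped MatrixOrder in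
lemma matSqrt_eq {Γ : Matrix (Fin q) (Fin q) ℝ} (hΓ : Γ.PosSemidef) :
    matSqrt Γ = CFC.sqrt Γ := dif_pos hΓ

open scoped MatrixOrder in
lemma matSqrt_isHermitian {Γ : Matrix (Fin q) (Fin q) ℝ} (hΓ : Γ.PosSemidef) :
    (matSqrt Γ).IsHermitian := by
  rw [matSqrt_eq hΓ]; exact (Matrix.nonneg_iff_posSemidef.mp (CFC.sqrt_nonneg Γ)).1

open scoped MatrixOrder in
lemma matSqrt_mul_self {Γ : Matrix (Fin q) (Fin q) ℝ} (hΓ : Γ.PosSemidef) :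
    matSqrt Γ * matSqrt Γ = Γ := by
  rw [matSqrt_eq hΓ]; exact CFC.sqrt_mul_sqrt_self Γ (Matrix.nonneg_iff_posSemidef.mpr hΓ)

open scoped MatrixOrder in
lemma matSqrt_posDef {Γ : Matrix (Fin q) (Fin q) ℝ} (hΓ : Γ.PosDef) :
    (matSqrt Γ).PosDef := by
  have hps : (matSqrt Γ).PosSemidef := by
    rw [matSqrt_eq hΓ.posSemidef]; exact Matrix.nonneg_iff_posSemidef.mp (CFC.sqrt_nonneg Γ)
  have hdet : IsUnit (matSqrt Γ).det := by
    have h1 : (matSqrt Γ).det * (matSqrt Γ).det = Γ.det := by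
      rw [← Matrix.det_mul, matSqrt_mul_self hΓ.posSemidef]
    refine isUnit_iff_ne_zero.mpr fun h0 => hΓ.det_pos.ne' ?_
    rw [← h1, h0, zero_mul]
  refine Matrix.PosDef.of_dotProduct_mulVec_pos hps.1 fun x hx => ?_
  refine lt_of_le_of_ne (hps.dotProduct_mulVec_nonneg x) fun h0 => hx ?_
  have h2 : matSqrt Γ *ᵥ x = 0 := (hps.dotProduct_mulVec_zero_iff x).mp h0.symm
  have hinj := Matrix.mulVec_injective_iff_isUnit.mpr ((Matrix.isUnit_iff_isUnit_det _).mpr hdet)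
  exact hinj (h2.trans (Matrix.mulVec_zero _).symm)

lemma posDef_smul {A : Matrix (Fin q) (Fin q) ℝ} (hA : A.PosDef) {a : ℝ} (ha : 0 < a) :
    (a • A).PosDef := by
  refine Matrix.PosDef.of_dotProduct_mulVec_pos ?_ fun x hx => ?_
  · show _ᴴ = _
    rw [Matrix.conjTranspose_smul, star_trivial, hA.1]
  · rw [Matrix.smul_mulVec, dotProduct_smul, smul_eq_mul]
    exact mul_pos ha (hA.dotProduct_mulVec_pos hx)

lemma inv_quadform_bounds {A : Matrix (Fin q) (Fin q) ℝ} (hA : A.PosDef)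
    {a b : ℝ} (ha : 0 < a)
    (hla : ∀ i, a ≤ hA.isHermitian.eigenvalues i)
    (hlb : ∀ i, hA.isHermitian.eigenvalues i ≤ b) (v : Fin q → ℝ) :
    b⁻¹ * (v ⬝ᵥ v) ≤ v ⬝ᵥ A⁻¹ *ᵥ v ∧ v ⬝ᵥ A⁻¹ *ᵥ v ≤ a⁻¹ * (v ⬝ᵥ v) := by
  classical
  have hH := hA.isHermitian
  set U : Matrix (Fin q) (Fin q) ℝ := (hH.eigenvectorUnitary : Matrix (Fin q) (Fin q) ℝ)
    with hUdef
  set e : Fin q → ℝ := hH.eigenvalues with hedef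
  have hU1 : U * star U = 1 := Matrix.mem_unitaryGroup_iff.mp hH.eigenvectorUnitary.2
  have hU2 : star U * U = 1 := Matrix.mem_unitaryGroup_iff'.mp hH.eigenvectorUnitary.2
  have hepos : ∀ i, 0 < e i := fun i => hA.eigenvalues_pos i
  have hspec : A = U * Matrix.diagonal e * star U := by
    have h1 : A = U * Matrix.diagonal (RCLike.ofReal ∘ e) * star U := hH.spectral_theorem
    have h2 : (RCLike.ofReal ∘ e : Fin q → ℝ) = e := by
      funext i; simp [RCLike.ofReal_real_eq_id]
    rwa [h2] at h1
  have hAinv : A⁻¹ = U * Matrix.diagonal (fun j => (e j)⁻¹) * star U := by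
    apply Matrix.inv_eq_right_inv
    rw [hspec]
    have h3 : U * Matrix.diagonal e * star U * (U * Matrix.diagonal (fun j => (e j)⁻¹) * star U)
        = U * (Matrix.diagonal e * (star U * U) * Matrix.diagonal (fun j => (e j)⁻¹)) * star U := by
      simp only [Matrix.mul_assoc]
    rw [h3, hU2, Matrix.mul_one, Matrix.diagonal_mul_diagonal]
    have h4 : (fun i => e i * (e i)⁻¹) = fun _ => (1 : ℝ) :=
      funext fun j => mul_inv_cancel₀ (hepos j).ne'
    rw [h4, Matrix.diagonal_one, Matrix.mul_one, hU1]
  have hTrans : star U = Uᵀ := by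
    ext i j
    simp [Matrix.conjTranspose_apply]
  set z := star U *ᵥ v with hz
  have key : ∀ d : Fin q → ℝ,
      v ⬝ᵥ (U * Matrix.diagonal d * star U) *ᵥ v = ∑ j, d j * (z j) ^ 2 := by
    intro d
    rw [← Matrix.mulVec_mulVec, ← Matrix.mulVec_mulVec, Matrix.dotProduct_mulVec,
      ← Matrix.mulVec_transpose, ← hTrans, ← hz]
    simp only [dotProduct, Matrix.mulVec_diagonal]
    exact Finset.sum_congr rfl fun j _ => by ring
  have hvv : v ⬝ᵥ v = ∑ j, (z j) ^ 2 := by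
    have h1 := key (fun _ => 1)
    rw [Matrix.diagonal_one, Matrix.mul_one, hU1, Matrix.one_mulVec] at h1
    simpa using h1
  rw [hAinv, key]
  constructor
  · rw [hvv, Finset.mul_sum]
    refine Finset.sum_le_sum fun j _ => ?_
    have h5 : b⁻¹ ≤ (e j)⁻¹ := inv_anti₀ (hepos j) (hlb j)
    exact mul_le_mul_of_nonneg_right h5 (sq_nonneg _)
  · rw [hvv, Finset.mul_sum]
    refine Finset.sum_le_sum fun j _ => ?_
    have h5 : (e j)⁻¹ ≤ a⁻¹ := inv_anti₀ ha (hla j)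
    exact mul_le_mul_of_nonneg_right h5 (sq_nonneg _)

lemma Nmat_isHermitian (y : Fin n → (Fin q → ℝ)) (c : ℝ)
    {Γ : Matrix (Fin q) (Fin q) ℝ} (hΓ : Γ.PosDef) : (Nmat y c Γ).IsHermitian := by
  have hR : ((matSqrt Γ)⁻¹).IsHermitian := (matSqrt_isHermitian hΓ.posSemidef).inv
  have hterm : ∀ i, (((matSqrt Γ)⁻¹ * vecMulVec (y i) (y i) * (matSqrt Γ)⁻¹))ᴴ
      = (matSqrt Γ)⁻¹ * vecMulVec (y i) (y i) * (matSqrt Γ)⁻¹ := by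
    intro i
    have hv : (vecMulVec (y i) (y i)).IsHermitian := by
      show _ᴴ = _
      ext j k
      simp [Matrix.conjTranspose_apply, Matrix.vecMulVec_apply, mul_comm]
    have h2 := Matrix.isHermitian_mul_mul_conjTranspose ((matSqrt Γ)⁻¹) hv
    rw [show (((matSqrt Γ)⁻¹)ᴴ : Matrix (Fin q) (Fin q) ℝ) = (matSqrt Γ)⁻¹ from hR] at h2
    exact h2
  have h1 : (Γ⁻¹)ᴴ = Γ⁻¹ := hΓ.isHermitian.inv
  show _ᴴ = _
  unfold Nmat
  rw [Matrix.conjTranspose_add, h1, Matrix.conjTranspose_smul, star_trivial,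
    Matrix.conjTranspose_sum]
  congr 2
  refine Finset.sum_congr rfl fun i _ => ?_
  rw [Matrix.conjTranspose_smul, star_trivial, hterm i]

lemma Nmat_quadform (y : Fin n → (Fin q → ℝ)) (c : ℝ)
    {Γ : Matrix (Fin q) (Fin q) ℝ} (hΓ : Γ.PosDef) (x : Fin q → ℝ) :
    x ⬝ᵥ (Nmat y c Γ) *ᵥ x
      = c * ∑ i, (y i ⬝ᵥ Γ⁻¹ *ᵥ y i)⁻¹ * (y i ⬝ᵥ ((matSqrt Γ)⁻¹ *ᵥ x)) ^ 2
        + x ⬝ᵥ Γ⁻¹ *ᵥ x := by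
  have hRt : ((matSqrt Γ)⁻¹)ᵀ = (matSqrt Γ)⁻¹ :=
    hermTranspose (matSqrt_isHermitian hΓ.posSemidef).inv
  unfold Nmat
  rw [Matrix.add_mulVec, dotProduct_add, Matrix.smul_mulVec,
    dotProduct_smul, smul_eq_mul, sum_mulVec', dotProduct_sum']
  congr 1
  refine congrArg (c * ·) (Finset.sum_congr rfl fun i _ => ?_)
  rw [Matrix.smul_mulVec, dotProduct_smul, smul_eq_mul, quad_conj hRt,
    quad_vecMulVec]

lemma Nmat_posDef (y : Fin n → (Fin q → ℝ)) {c : ℝ} (hc : 0 ≤ c)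
    {Γ : Matrix (Fin q) (Fin q) ℝ} (hΓ : Γ.PosDef) : (Nmat y c Γ).PosDef := by
  refine Matrix.PosDef.of_dotProduct_mulVec_pos (Nmat_isHermitian y c hΓ) fun x hx => ?_
  rw [_root_.star_vec, Nmat_quadform y c hΓ x]
  have h1 : 0 < x ⬝ᵥ Γ⁻¹ *ᵥ x := by
    have := hΓ.inv.dotProduct_mulVec_pos hx; rwa [_root_.star_vec] at this
  have h2 : 0 ≤ c * ∑ i, (y i ⬝ᵥ Γ⁻¹ *ᵥ y i)⁻¹ * (y i ⬝ᵥ ((matSqrt Γ)⁻¹ *ᵥ x)) ^ 2 := by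
    refine mul_nonneg hc (Finset.sum_nonneg fun i _ =>
      mul_nonneg (inv_nonneg.mpr ?_) (sq_nonneg _))
    have := hΓ.inv.posSemidef.dotProduct_mulVec_nonneg (y i); rwa [_root_.star_vec] at this
  linarith

end Auxiliary

/-- If the nonzero `yᵢ` span `ℝ^q`, `c > 0`, `Γ ≻ 0`, `α > 0` and
`Γ' = α · Γ^(1/2) N(Γ) Γ^(1/2)`, then, with `λ₁` and `λ_q` the largest and smallest
eigenvalues of `N(Γ)`, in the Loewner order
`N(Γ') ⪰ λ_q·I + (1 − α·λ_q)·Γ'⁻¹` and `N(Γ') ⪯ λ₁·I + (1 − α·λ₁)·Γ'⁻¹`. -/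
theorem Nmat_loewner_bounds {q n : ℕ}
    (y : Fin n → (Fin q → ℝ)) (hy : ∀ i, y i ≠ 0)
    (hspan : Submodule.span ℝ (Set.range y) = ⊤)
    {c : ℝ} (hc : 0 < c)
    {Γ : Matrix (Fin q) (Fin q) ℝ} (hΓ : Γ.PosDef)
    {α : ℝ} (hα : 0 < α)
    {Γ' : Matrix (Fin q) (Fin q) ℝ}
    (hΓ' : Γ' = α • (matSqrt Γ * Nmat y c Γ * matSqrt Γ)) :
    loewnerLE (minEig (Nmat y c Γ) • (1 : Matrix (Fin q) (Fin q) ℝ)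
        + (1 - α * minEig (Nmat y c Γ)) • Γ'⁻¹) (Nmat y c Γ') ∧
      loewnerLE (Nmat y c Γ') (maxEig (Nmat y c Γ) • (1 : Matrix (Fin q) (Fin q) ℝ)
        + (1 - α * maxEig (Nmat y c Γ)) • Γ'⁻¹) := by
  classical
  rcases Nat.eq_zero_or_pos q with hq | hq
  · subst hq
    constructor <;>
      exact Matrix.PosSemidef.of_dotProduct_mulVec_nonneg (by ext i j; exact i.elim0) fun x => by simp [dotProduct]
  haveI : Nonempty (Fin q) := ⟨⟨0, hq⟩⟩
  have hRpd : (matSqrt Γ).PosDef := matSqrt_posDef hΓ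
  have hRR' : matSqrt Γ * matSqrt Γ = Γ := matSqrt_mul_self hΓ.posSemidef
  set R := matSqrt Γ with hRdef
  have hRH : R.IsHermitian := hRpd.isHermitian
  have hRt : Rᵀ = R := hermTranspose hRH
  have hRit : (R⁻¹)ᵀ = R⁻¹ := hermTranspose hRH.inv
  have hRdet : IsUnit R.det := isUnit_iff_ne_zero.mpr hRpd.det_pos.ne'
  have hRinv : R⁻¹ * R = 1 := Matrix.nonsing_inv_mul R hRdet
  have hRinv' : R * R⁻¹ = 1 := Matrix.mul_nonsing_inv R hRdet
  have hΓinv : Γ⁻¹ = R⁻¹ * R⁻¹ := by rw [← hRR', Matrix.mul_inv_rev]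
  have hRΓR : R * Γ⁻¹ * R = 1 := by
    rw [hΓinv, ← Matrix.mul_assoc, hRinv', Matrix.one_mul, hRinv]
  have hNH0 : (Nmat y c Γ).IsHermitian := Nmat_isHermitian y c hΓ
  have hNpd0 : (Nmat y c Γ).PosDef := Nmat_posDef y hc.le hΓ
  set N := Nmat y c Γ with hNdef
  have hNdet : IsUnit N.det := isUnit_iff_ne_zero.mpr hNpd0.det_pos.ne'
  have hNinv' : N * N⁻¹ = 1 := Matrix.mul_nonsing_inv N hNdet
  have hΓ'pd : Γ'.PosDef := by
    rw [hΓ']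
    refine posDef_smul ?_ hα
    refine Matrix.PosDef.of_dotProduct_mulVec_pos ?_ fun x hx => ?_
    · show _ᴴ = _
      rw [Matrix.conjTranspose_mul, Matrix.conjTranspose_mul,
        show (Rᴴ : Matrix (Fin q) (Fin q) ℝ) = R from hRH,
        show (Nᴴ : Matrix (Fin q) (Fin q) ℝ) = N from hNH0, Matrix.mul_assoc]
    · rw [_root_.star_vec, quad_conj hRt]
      have hx' : R *ᵥ x ≠ 0 := fun h0 =>
        hx (Matrix.mulVec_injective_iff_isUnit.mpr ((Matrix.isUnit_iff_isUnit_det R).mpr hRdet)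
          (h0.trans (Matrix.mulVec_zero R).symm))
      have h2 := hNpd0.dotProduct_mulVec_pos hx'
      rwa [_root_.star_vec] at h2
  have hQpd : (matSqrt Γ').PosDef := matSqrt_posDef hΓ'pd
  have hQQ' : matSqrt Γ' * matSqrt Γ' = Γ' := matSqrt_mul_self hΓ'pd.posSemidef
  set Q := matSqrt Γ' with hQdef
  have hQt : Qᵀ = Q := hermTranspose hQpd.isHermitian
  have hQit : (Q⁻¹)ᵀ = Q⁻¹ := hermTranspose hQpd.isHermitian.inv
  have hQdet : IsUnit Q.det := isUnit_iff_ne_zero.mpr hQpd.det_pos.ne'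
  have hQinv' : Q * Q⁻¹ = 1 := Matrix.mul_nonsing_inv Q hQdet
  have hΓ'invQ : Γ'⁻¹ = Q⁻¹ * Q⁻¹ := by rw [← hQQ', Matrix.mul_inv_rev]
  have hΓ'inv : Γ'⁻¹ = α⁻¹ • (R⁻¹ * N⁻¹ * R⁻¹) := by
    apply Matrix.inv_eq_right_inv
    rw [hΓ', Matrix.smul_mul, Matrix.mul_smul, smul_smul, mul_inv_cancel₀ hα.ne', one_smul]
    rw [show R * N * R * (R⁻¹ * N⁻¹ * R⁻¹) = R * (N * ((R * R⁻¹) * (N⁻¹ * R⁻¹))) from by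
      simp only [Matrix.mul_assoc], hRinv', Matrix.one_mul]
    rw [show R * (N * (N⁻¹ * R⁻¹)) = R * ((N * N⁻¹) * R⁻¹) from by
      simp only [Matrix.mul_assoc], hNinv', Matrix.one_mul, hRinv']
  have hminEq : minEig N = ⨅ i, hNH0.eigenvalues i := dif_pos hNH0
  have hmaxEq : maxEig N = ⨆ i, hNH0.eigenvalues i := dif_pos hNH0
  have hevpos : ∀ i, 0 < hNH0.eigenvalues i := fun i => hNpd0.eigenvalues_pos i
  have hbddA : BddAbove (Set.range hNH0.eigenvalues) := Set.Finite.bddAbove (Set.finite_range _)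
  have hbddB : BddBelow (Set.range hNH0.eigenvalues) := Set.Finite.bddBelow (Set.finite_range _)
  have hmin_le : ∀ i, minEig N ≤ hNH0.eigenvalues i := fun i => hminEq ▸ ciInf_le hbddB i
  have hle_max : ∀ i, hNH0.eigenvalues i ≤ maxEig N := fun i => hmaxEq ▸ le_ciSup hbddA i
  have hlminpos : 0 < minEig N := by
    obtain ⟨j, hj⟩ := Finite.exists_min hNH0.eigenvalues
    rw [hminEq, le_antisymm (ciInf_le hbddB j) (le_ciInf hj)]
    exact hevpos j
  have hlmaxpos : 0 < maxEig N :=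
    hlminpos.trans_le ((hmin_le (Classical.arbitrary _)).trans (hle_max _))
  have hd : ∀ i, 0 < y i ⬝ᵥ Γ⁻¹ *ᵥ y i := fun i => by
    have := hΓ.inv.dotProduct_mulVec_pos (hy i); rwa [_root_.star_vec] at this
  have hd' : ∀ i, 0 < y i ⬝ᵥ Γ'⁻¹ *ᵥ y i := fun i => by
    have := hΓ'pd.inv.dotProduct_mulVec_pos (hy i); rwa [_root_.star_vec] at this
  have hαd' : ∀ i, α * (y i ⬝ᵥ Γ'⁻¹ *ᵥ y i) = (R⁻¹ *ᵥ y i) ⬝ᵥ N⁻¹ *ᵥ (R⁻¹ *ᵥ y i) := by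
    intro i
    rw [hΓ'inv, Matrix.smul_mulVec, dotProduct_smul, smul_eq_mul, ← mul_assoc,
      mul_inv_cancel₀ hα.ne', one_mul, quad_conj hRit]
  have hvvd : ∀ i, (R⁻¹ *ᵥ y i) ⬝ᵥ (R⁻¹ *ᵥ y i) = y i ⬝ᵥ Γ⁻¹ *ᵥ y i := by
    intro i
    conv_rhs => rw [hΓinv, show (R⁻¹ * R⁻¹ : Matrix (Fin q) (Fin q) ℝ) = R⁻¹ * 1 * R⁻¹ from by
      rw [Matrix.mul_one]]
    rw [quad_conj hRit, Matrix.one_mulVec]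
  have hbounds := fun v => inv_quadform_bounds hNpd0 hlminpos hmin_le hle_max v
  have hterm_lo : ∀ i, α * minEig N * (y i ⬝ᵥ Γ⁻¹ *ᵥ y i)⁻¹ ≤ (y i ⬝ᵥ Γ'⁻¹ *ᵥ y i)⁻¹ := by
    intro i
    have h1 := (hbounds (R⁻¹ *ᵥ y i)).2
    rw [← hαd' i, hvvd i] at h1
    have h3 : (α * minEig N) * (y i ⬝ᵥ Γ'⁻¹ *ᵥ y i) ≤ y i ⬝ᵥ Γ⁻¹ *ᵥ y i := by
      calc (α * minEig N) * (y i ⬝ᵥ Γ'⁻¹ *ᵥ y i)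
          = minEig N * (α * (y i ⬝ᵥ Γ'⁻¹ *ᵥ y i)) := by ring
        _ ≤ minEig N * ((minEig N)⁻¹ * (y i ⬝ᵥ Γ⁻¹ *ᵥ y i)) :=
            mul_le_mul_of_nonneg_left h1 hlminpos.le
        _ = y i ⬝ᵥ Γ⁻¹ *ᵥ y i := by
            rw [← mul_assoc, mul_inv_cancel₀ hlminpos.ne', one_mul]
    exact scaled_le_inv (hd i) (hd' i) h3
  have hterm_hi : ∀ i, (y i ⬝ᵥ Γ'⁻¹ *ᵥ y i)⁻¹ ≤ α * maxEig N * (y i ⬝ᵥ Γ⁻¹ *ᵥ y i)⁻¹ := by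
    intro i
    have h1 := (hbounds (R⁻¹ *ᵥ y i)).1
    rw [← hαd' i, hvvd i] at h1
    have h3 : y i ⬝ᵥ Γ⁻¹ *ᵥ y i ≤ (α * maxEig N) * (y i ⬝ᵥ Γ'⁻¹ *ᵥ y i) := by
      calc y i ⬝ᵥ Γ⁻¹ *ᵥ y i
          = maxEig N * ((maxEig N)⁻¹ * (y i ⬝ᵥ Γ⁻¹ *ᵥ y i)) := by
            rw [← mul_assoc, mul_inv_cancel₀ hlmaxpos.ne', one_mul]
        _ ≤ maxEig N * (α * (y i ⬝ᵥ Γ'⁻¹ *ᵥ y i)) :=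
            mul_le_mul_of_nonneg_left h1 hlmaxpos.le
        _ = (α * maxEig N) * (y i ⬝ᵥ Γ'⁻¹ *ᵥ y i) := by ring
    exact inv_le_scaled (hd i) (hd' i) h3
  have hNH' : (Nmat y c Γ').IsHermitian := Nmat_isHermitian y c hΓ'pd
  have key : ∀ x : Fin q → ℝ, ∃ w : Fin q → ℝ,
      x ⬝ᵥ Γ'⁻¹ *ᵥ x = w ⬝ᵥ w ∧
      x ⬝ᵥ (Nmat y c Γ') *ᵥ x
        = c * ∑ i, (y i ⬝ᵥ Γ'⁻¹ *ᵥ y i)⁻¹ * (y i ⬝ᵥ w) ^ 2 + w ⬝ᵥ w ∧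
      x ⬝ᵥ x = α * (c * ∑ i, (y i ⬝ᵥ Γ⁻¹ *ᵥ y i)⁻¹ * (y i ⬝ᵥ w) ^ 2 + w ⬝ᵥ w) := by
    intro x
    have e3 : x ⬝ᵥ Γ'⁻¹ *ᵥ x = (Q⁻¹ *ᵥ x) ⬝ᵥ (Q⁻¹ *ᵥ x) := by
      rw [hΓ'invQ, show (Q⁻¹ * Q⁻¹ : Matrix (Fin q) (Fin q) ℝ) = Q⁻¹ * 1 * Q⁻¹ from by
        rw [Matrix.mul_one], quad_conj hQit, Matrix.one_mulVec]
    refine ⟨Q⁻¹ *ᵥ x, e3, ?_, ?_⟩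
    · rw [Nmat_quadform y c hΓ'pd x, ← hQdef, e3]
    · have hxw : Q *ᵥ (Q⁻¹ *ᵥ x) = x := by
        rw [Matrix.mulVec_mulVec, hQinv', Matrix.one_mulVec]
      conv_lhs => rw [← hxw]
      rw [show (Q *ᵥ (Q⁻¹ *ᵥ x)) ⬝ᵥ (Q *ᵥ (Q⁻¹ *ᵥ x))
          = (Q⁻¹ *ᵥ x) ⬝ᵥ (Q * 1 * Q) *ᵥ (Q⁻¹ *ᵥ x) from by
        rw [quad_conj hQt, Matrix.one_mulVec]]
      rw [Matrix.mul_one, hQQ', hΓ', Matrix.smul_mulVec, dotProduct_smul,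
        smul_eq_mul]
      congr 1
      rw [quad_conj hRt, hNdef, Nmat_quadform y c hΓ, ← hRdef,
        Matrix.mulVec_mulVec (Q⁻¹ *ᵥ x) R⁻¹ R, hRinv, Matrix.one_mulVec,
        ← quad_conj hRt (Q⁻¹ *ᵥ x), hRΓR, Matrix.one_mulVec]
  constructor
  · refine Matrix.PosSemidef.of_dotProduct_mulVec_nonneg ?_ fun x => ?_
    · show _ᴴ = _
      rw [Matrix.conjTranspose_sub, Matrix.conjTranspose_add, Matrix.conjTranspose_smul,
        Matrix.conjTranspose_smul, Matrix.conjTranspose_one, star_trivial, star_trivial,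
        show ((Γ'⁻¹)ᴴ : Matrix (Fin q) (Fin q) ℝ) = Γ'⁻¹ from hΓ'pd.isHermitian.inv,
        show ((Nmat y c Γ')ᴴ : Matrix (Fin q) (Fin q) ℝ) = Nmat y c Γ' from hNH']
    · rw [_root_.star_vec, Matrix.sub_mulVec, dotProduct_sub, Matrix.add_mulVec,
        dotProduct_add, Matrix.smul_mulVec, Matrix.smul_mulVec,
        dotProduct_smul, dotProduct_smul, smul_eq_mul, smul_eq_mul,
        Matrix.one_mulVec]
      obtain ⟨w, e3, e1, e2⟩ := key x
      rw [e1, e2, e3]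
      have hsum : (α * minEig N) * ∑ i, (y i ⬝ᵥ Γ⁻¹ *ᵥ y i)⁻¹ * (y i ⬝ᵥ w) ^ 2
          ≤ ∑ i, (y i ⬝ᵥ Γ'⁻¹ *ᵥ y i)⁻¹ * (y i ⬝ᵥ w) ^ 2 := by
        rw [Finset.mul_sum]
        refine Finset.sum_le_sum fun i _ => ?_
        have := mul_le_mul_of_nonneg_right (hterm_lo i) (sq_nonneg (y i ⬝ᵥ w))
        linarith
      have hc' := mul_le_mul_of_nonneg_left hsum hc.le
      nlinarith [hc']
  · refine Matrix.PosSemidef.of_dotProduct_mulVec_nonneg ?_ fun x => ?_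
    · show _ᴴ = _
      rw [Matrix.conjTranspose_sub, Matrix.conjTranspose_add, Matrix.conjTranspose_smul,
        Matrix.conjTranspose_smul, Matrix.conjTranspose_one, star_trivial, star_trivial,
        show ((Γ'⁻¹)ᴴ : Matrix (Fin q) (Fin q) ℝ) = Γ'⁻¹ from hΓ'pd.isHermitian.inv,
        show ((Nmat y c Γ')ᴴ : Matrix (Fin q) (Fin q) ℝ) = Nmat y c Γ' from hNH']
    · rw [_root_.star_vec, Matrix.sub_mulVec, dotProduct_sub, Matrix.add_mulVec,
        dotProduct_add, Matrix.smul_mulVec, Matrix.smul_mulVec,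
        dotProduct_smul, dotProduct_smul, smul_eq_mul, smul_eq_mul,
        Matrix.one_mulVec]
      obtain ⟨w, e3, e1, e2⟩ := key x
      rw [e1, e2, e3]
      have hsum : ∑ i, (y i ⬝ᵥ Γ'⁻¹ *ᵥ y i)⁻¹ * (y i ⬝ᵥ w) ^ 2
          ≤ (α * maxEig N) * ∑ i, (y i ⬝ᵥ Γ⁻¹ *ᵥ y i)⁻¹ * (y i ⬝ᵥ w) ^ 2 := by
        rw [Finset.mul_sum]
        refine Finset.sum_le_sum fun i _ => ?_
        have := mul_le_mul_of_nonneg_right (hterm_hi i) (sq_nonneg (y i ⬝ᵥ w))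
        linarith
      have hc' := mul_le_mul_of_nonneg_left hsum hc.le
      nlinarith [hc']
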